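/- Let A be self-adjoint on a finite-dimensional real inner product space, φ₁ a unit eigenvector of A with eigenvalue λ₁, and à = A - λ₁I. If y^n satisfies the nonstandard scheme (exp(λ₁τ) y^{n+1} - y^n)/τ + Ã(σ exp(λ₁τ) y^{n+1} + (1-σ) y^n) = 0, then the fundamental mode is computed exactly: ⟨y^{n+1}, φ₁⟩ = exp(-λ₁τ) ⟨y^n, φ₁⟩. -/

import Mathlib

open scoped RealInnerProductSpace

/-- The nonstandard scheme computes the fundamental mode exactly:
⟨y^{n+1}, φ₁⟩ = exp(-λ₁τ) ⟨yⁿ, φ₁⟩. -/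
theorem stmt_5 {H : Type*} [NormedAddCommGroup H] [InnerProductSpace ℝ H]
    [FiniteDimensional ℝ H] (A : H →ₗ[ℝ] H)
    (hsa : ∀ x y : H, ⟪A x, y⟫ = ⟪x, A y⟫)
    (lam1 : ℝ) (φ1 : H) (hφnorm : ‖φ1‖ = 1) (hφeig : A φ1 = lam1 • φ1)
    (σ τ : ℝ) (hτ : 0 < τ) (y : ℕ → H)
    (hscheme : ∀ n : ℕ,
      (1 / τ) • (Real.exp (lam1 * τ) • y (n + 1) - y n) +
        ((A - lam1 • (LinearMap.id : H →ₗ[ℝ] H))) ((σ * Real.exp (lam1 * τ)) • y (n + 1) + (1 - σ) • y n) = 0) :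
    ∀ n : ℕ, ⟪y (n + 1), φ1⟫ = Real.exp (-(lam1 * τ)) * ⟪y n, φ1⟫ := by
  intro n
  have hAtilde : ∀ z : H, ⟪(A - lam1 • (LinearMap.id : H →ₗ[ℝ] H)) z, φ1⟫ = 0 := by
    intro z
    simp only [LinearMap.sub_apply, LinearMap.smul_apply, LinearMap.id_apply]
    rw [inner_sub_left, hsa, hφeig, real_inner_smul_right, real_inner_smul_left]
    ring
  have h := congrArg (fun w => ⟪w, φ1⟫) (hscheme n)
  simp only [inner_add_left, hAtilde, inner_zero_left, add_zero] at h
  rw [inner_smul_left, inner_sub_left, inner_smul_left] at h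
  have hτ' : (1 : ℝ) / τ ≠ 0 := by positivity
  have h2 : Real.exp (lam1 * τ) * ⟪y (n+1), φ1⟫ - ⟪y n, φ1⟫ = 0 := by
    simp only [conj_trivial] at h
    field_simp at h
    rw [mul_comm τ lam1] at h
    linarith
  have he := Real.exp_pos (lam1 * τ)
  rw [Real.exp_neg]
  field_simp
  linarith
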